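/- arXiv:1703.09677 — 4 statements merged into one kernel-verified Lean document; each statement's English description precedes it below -/
import Mathlib

section
/- Let U = (U_1,...,U_d) be a tuple of commuting bounded operators on a Hilbert space K such that each pairwise product commutes and ∑_{k=1}^d U_k U_k* = ∑_{k=1}^d U_k* U_k = I. Then each U_k is normal, i.e., U is a spherical unitary. (Assume the Athavale extension theorem: every spherical isometry extends to a spherical unitary.) -/
open scoped InnerProductSpace

noncomputable section

open ContinuousLinearMap in
private lemma aux_mul_star_inner {E : Type*} [NormedAddCommGroup E] [InnerProductSpace ℂ E]
    [CompleteSpace E] (A : E →L[ℂ] E) (z : E) :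
    ⟪(A * star A) z, z⟫_ℂ = ⟪star A z, star A z⟫_ℂ := by
  rw [ContinuousLinearMap.mul_apply, star_eq_adjoint, ← adjoint_inner_right]

open ContinuousLinearMap in
private lemma aux_star_mul_inner {E : Type*} [NormedAddCommGroup E] [InnerProductSpace ℂ E]
    [CompleteSpace E] (A : E →L[ℂ] E) (z : E) :
    ⟪(star A * A) z, z⟫_ℂ = ⟪A z, A z⟫_ℂ := by
  rw [ContinuousLinearMap.mul_apply, star_eq_adjoint, adjoint_inner_left]

/-- If a commuting tuple `U` of bounded operators on a Hilbert space `K` satisfies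
`∑ Uₖ Uₖ* = ∑ Uₖ* Uₖ = I`, then each `Uₖ` is normal, i.e. `U` is a spherical unitary.
Athavale's extension theorem is assumed, in the form of an extension of `U` (which is a
spherical isometry together with its adjoint tuple) to a spherical unitary `V` on a larger
Hilbert space `L`, via a linear isometry `ι : K → L`. -/
theorem stmt0 {d : ℕ} {K L : Type*}
    [NormedAddCommGroup K] [InnerProductSpace ℂ K] [CompleteSpace K]
    [NormedAddCommGroup L] [InnerProductSpace ℂ L] [CompleteSpace L]
    (U : Fin d → K →L[ℂ] K)
    (hUcomm : ∀ i j, U i * U j = U j * U i)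
    (hrow : (∑ i, U i * star (U i)) = 1)
    (hcol : (∑ i, star (U i) * U i) = 1)
    -- Athavale's theorem applied to the spherical isometry `U`:
    (ι : K →ₗᵢ[ℂ] L) (V : Fin d → L →L[ℂ] L)
    (hVcomm : ∀ i j, V i * V j = V j * V i)
    (hVnormal : ∀ i, IsStarNormal (V i))
    (hVrow : (∑ i, V i * star (V i)) = 1)
    (hext : ∀ i x, V i (ι x) = ι (U i x)) :
    ∀ i, IsStarNormal (U i) := by
  -- For a normal operator, ⟪T* y, T* y⟫ = ⟪T y, T y⟫
  have hadj_inner : ∀ i (y : L), ⟪star (V i) y, star (V i) y⟫_ℂ = ⟪V i y, V i y⟫_ℂ := by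
    intro i y
    have hc : star (V i) * V i = V i * star (V i) := (hVnormal i).star_comm_self
    calc ⟪star (V i) y, star (V i) y⟫_ℂ = ⟪(V i * star (V i)) y, y⟫_ℂ :=
          (aux_mul_star_inner (V i) y).symm
      _ = ⟪(star (V i) * V i) y, y⟫_ℂ := by rw [hc]
      _ = ⟪V i y, V i y⟫_ℂ := aux_star_mul_inner (V i) y
  -- key: the adjoints also restrict: V i* (ι x) = ι (U i* x)
  have key : ∀ (x : K) i, star (V i) (ι x) = ι (star (U i) x) := by
    intro x
    set D : Fin d → L := fun i => star (V i) (ι x) - ι (star (U i) x) with hD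
    have hsum : (∑ i, ⟪D i, D i⟫_ℂ) = 0 := by
      have expand : ∀ i, ⟪D i, D i⟫_ℂ
          = ⟪star (V i) (ι x), star (V i) (ι x)⟫_ℂ
            - ⟪star (V i) (ι x), ι (star (U i) x)⟫_ℂ
            - ⟪ι (star (U i) x), star (V i) (ι x)⟫_ℂ
            + ⟪ι (star (U i) x), ι (star (U i) x)⟫_ℂ := fun i => inner_sub_sub_self _ _
      have ha : (∑ i, ⟪star (V i) (ι x), star (V i) (ι x)⟫_ℂ) = ⟪x, x⟫_ℂ := by
        have h1 : ∀ i, ⟪star (V i) (ι x), star (V i) (ι x)⟫_ℂ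
            = ⟪(V i * star (V i)) (ι x), ι x⟫_ℂ := fun i => (aux_mul_star_inner _ _).symm
        simp_rw [h1]
        rw [← sum_inner]
        have := congrArg (fun T => T (ι x)) hVrow
        simp only [ContinuousLinearMap.sum_apply, ContinuousLinearMap.one_apply] at this
        rw [this, ι.inner_map_map]
      have hb : (∑ i, ⟪star (V i) (ι x), ι (star (U i) x)⟫_ℂ) = ⟪x, x⟫_ℂ := by
        have h1 : ∀ i, ⟪star (V i) (ι x), ι (star (U i) x)⟫_ℂ
            = ⟪x, (U i * star (U i)) x⟫_ℂ := by
          intro i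
          rw [ContinuousLinearMap.star_eq_adjoint, ContinuousLinearMap.adjoint_inner_left,
            hext, ι.inner_map_map, ContinuousLinearMap.mul_apply]
        simp_rw [h1]
        rw [← inner_sum]
        have := congrArg (fun T => T x) hrow
        simp only [ContinuousLinearMap.sum_apply, ContinuousLinearMap.one_apply] at this
        rw [this]
      have hc : (∑ i, ⟪ι (star (U i) x), star (V i) (ι x)⟫_ℂ) = ⟪x, x⟫_ℂ := by
        have h1 : ∀ i, ⟪ι (star (U i) x), star (V i) (ι x)⟫_ℂ
            = starRingEnd ℂ ⟪star (V i) (ι x), ι (star (U i) x)⟫_ℂ := fun i =>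
          (inner_conj_symm _ _).symm
        simp_rw [h1, ← map_sum, hb, inner_conj_symm]
      have hd : (∑ i, ⟪ι (star (U i) x), ι (star (U i) x)⟫_ℂ) = ⟪x, x⟫_ℂ := by
        have h1 : ∀ i, ⟪ι (star (U i) x), ι (star (U i) x)⟫_ℂ
            = ⟪(U i * star (U i)) x, x⟫_ℂ := by
          intro i
          rw [ι.inner_map_map]
          exact (aux_mul_star_inner _ _).symm
        simp_rw [h1]
        rw [← sum_inner]
        have := congrArg (fun T => T x) hrow
        simp only [ContinuousLinearMap.sum_apply, ContinuousLinearMap.one_apply] at this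
        rw [this]
      simp_rw [expand]
      rw [Finset.sum_add_distrib, Finset.sum_sub_distrib, Finset.sum_sub_distrib,
        ha, hb, hc, hd]
      ring
    -- conclude each term vanishes
    have hre : (∑ i, Complex.re ⟪D i, D i⟫_ℂ) = 0 := by
      have := congrArg Complex.re hsum
      simpa [Complex.re_sum] using this
    intro i
    have hzero : Complex.re ⟪D i, D i⟫_ℂ = 0 :=
      (Finset.sum_eq_zero_iff_of_nonneg
        (fun j _ => by
          simpa using (inner_self_nonneg (𝕜 := ℂ) (x := D j)))).mp hre i (Finset.mem_univ i)
    have hinner0 : ⟪D i, D i⟫_ℂ = 0 := by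
      have him : Complex.im ⟪D i, D i⟫_ℂ = 0 := by
        have h := inner_self_im (𝕜 := ℂ) (D i)
        rwa [RCLike.im_to_complex] at h
      exact Complex.ext hzero him
    have : D i = 0 := inner_self_eq_zero.mp hinner0
    simpa [hD, sub_eq_zero] using this
  -- Now ⟪U i x, U i x⟫ = ⟪U i* x, U i* x⟫ for all x
  have hUinner : ∀ i (x : K), ⟪star (U i) x, star (U i) x⟫_ℂ = ⟪U i x, U i x⟫_ℂ := by
    intro i x
    calc ⟪star (U i) x, star (U i) x⟫_ℂ = ⟪ι (star (U i) x), ι (star (U i) x)⟫_ℂ :=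
          (ι.inner_map_map _ _).symm
      _ = ⟪star (V i) (ι x), star (V i) (ι x)⟫_ℂ := by rw [key]
      _ = ⟪V i (ι x), V i (ι x)⟫_ℂ := hadj_inner i (ι x)
      _ = ⟪ι (U i x), ι (U i x)⟫_ℂ := by rw [hext]
      _ = ⟪U i x, U i x⟫_ℂ := ι.inner_map_map _ _
  -- conclude normality by polarization
  intro i
  constructor
  have hmaps : ∀ x : K, ⟪((star (U i) * U i : K →L[ℂ] K) : K →ₗ[ℂ] K) x, x⟫_ℂ
      = ⟪((U i * star (U i) : K →L[ℂ] K) : K →ₗ[ℂ] K) x, x⟫_ℂ := by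
    intro x
    have h1 : ⟪((star (U i) * U i : K →L[ℂ] K) : K →ₗ[ℂ] K) x, x⟫_ℂ = ⟪U i x, U i x⟫_ℂ :=
      aux_star_mul_inner (U i) x
    have h2 : ⟪((U i * star (U i) : K →L[ℂ] K) : K →ₗ[ℂ] K) x, x⟫_ℂ
        = ⟪star (U i) x, star (U i) x⟫_ℂ := aux_mul_star_inner (U i) x
    rw [h1, h2, hUinner]
  have hlin := (ext_inner_map _ _).mp hmaps
  have heq : (star (U i) * U i : K →L[ℂ] K) = U i * star (U i) := by
    ext x
    exact congrFun (congrArg DFunLike.coe hlin) x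
  exact heq
end
end

section
/- If a spherical unitary V = (V_1,...,V_d) on a Hilbert space L restricts to an invariant subspace M (i.e., each V_k maps M into M) such that the compressions U_k = V_k|_M satisfy ∑ U_k U_k* = I on M, then M is reducing for each V_k, and U = (U_1,...,U_d) is itself a spherical unitary. -/
open scoped InnerProductSpace

noncomputable section

/-- If a spherical unitary `V` on `L` restricts to an invariant subspace `M` such that the
restrictions `Uₖ = Vₖ|_M` satisfy `∑ Uₖ Uₖ* = I` on `M`, then `M` is reducing for each `Vₖ`
and `U` is itself a spherical unitary. -/
theorem stmt1 {d : ℕ} {L : Type*}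
    [NormedAddCommGroup L] [InnerProductSpace ℂ L] [CompleteSpace L]
    (V : Fin d → L →L[ℂ] L)
    (hVcomm : ∀ i j, V i * V j = V j * V i)
    (hVnormal : ∀ i, IsStarNormal (V i))
    (hVrow : (∑ i, V i * star (V i)) = 1)
    (M : Submodule ℂ L) (hMclosed : IsClosed (M : Set L)) [CompleteSpace M]
    (hinv : ∀ i, ∀ x ∈ M, V i x ∈ M)
    (U : Fin d → M →L[ℂ] M)
    (hU : ∀ i (x : M), (U i x : L) = V i (x : L))
    (hrow : (∑ i, U i * star (U i)) = 1) :
    (∀ i, ∀ x ∈ M, star (V i) x ∈ M) ∧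
      (∀ i, IsStarNormal (U i)) ∧ (∀ i j, U i * U j = U j * U i) := by
  -- Pythagoras for the orthogonal projection
  have pyth : ∀ v : L, ‖v‖ ^ 2 =
      ‖(M.orthogonalProjectionOnto v : L)‖ ^ 2 + ‖v - M.orthogonalProjectionOnto v‖ ^ 2 := by
    intro v
    have hmem : v - M.orthogonalProjectionOnto v ∈ Mᗮ := M.sub_starProjection_mem_orthogonal v
    have h0 : ⟪(M.orthogonalProjectionOnto v : L), v - M.orthogonalProjectionOnto v⟫_ℂ = 0 :=
      (Submodule.mem_orthogonal M _).1 hmem _ (M.orthogonalProjectionOnto v).2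
    have := norm_add_sq_eq_norm_sq_add_norm_sq_of_inner_eq_zero
      ((M.orthogonalProjectionOnto v : L)) (v - M.orthogonalProjectionOnto v) h0
    rw [add_sub_cancel] at this
    simp only [pow_two]
    linarith
  -- the adjoint of `U i` is the compression of the adjoint of `V i`
  have hadj : ∀ j (x : M), star (U j) x = M.orthogonalProjectionOnto ((star (V j)) (x : L)) := by
    intro j x
    apply ext_inner_right ℂ
    intro y
    rw [ContinuousLinearMap.star_eq_adjoint, ContinuousLinearMap.adjoint_inner_left,
      Submodule.inner_orthogonalProjectionOnto_eq_of_mem_right, ContinuousLinearMap.star_eq_adjoint,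
      ContinuousLinearMap.adjoint_inner_left, Submodule.coe_inner, hU]
  -- sum of squared norms of adjoints, for `U`
  have hUsum : ∀ x : M, ∑ i, ‖star (U i) x‖ ^ 2 = ‖x‖ ^ 2 := by
    intro x
    have h1 : ((∑ i, U i * star (U i)) x) = x := by rw [hrow]; rfl
    have h2 : ⟪((∑ i, U i * star (U i)) x), x⟫_ℂ = ⟪x, x⟫_ℂ := by rw [h1]
    rw [ContinuousLinearMap.sum_apply, sum_inner] at h2
    have h3 : ∀ i, ⟪((U i * star (U i)) x), x⟫_ℂ = (‖star (U i) x‖ : ℂ) ^ 2 := by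
      intro i
      rw [ContinuousLinearMap.mul_apply, ContinuousLinearMap.star_eq_adjoint,
        ← ContinuousLinearMap.adjoint_inner_right, ← ContinuousLinearMap.star_eq_adjoint,
        inner_self_eq_norm_sq_to_K]
      rfl
    rw [Finset.sum_congr rfl (fun i _ => h3 i), inner_self_eq_norm_sq_to_K] at h2
    exact Complex.ofReal_inj.mp (by push_cast; exact h2)
  -- sum of squared norms of adjoints, for `V`
  have hVsum : ∀ v : L, ∑ i, ‖star (V i) v‖ ^ 2 = ‖v‖ ^ 2 := by
    intro v
    have h1 : ((∑ i, V i * star (V i)) v) = v := by rw [hVrow]; rfl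
    have h2 : ⟪((∑ i, V i * star (V i)) v), v⟫_ℂ = ⟪v, v⟫_ℂ := by rw [h1]
    rw [ContinuousLinearMap.sum_apply, sum_inner] at h2
    have h3 : ∀ i, ⟪((V i * star (V i)) v), v⟫_ℂ = (‖star (V i) v‖ : ℂ) ^ 2 := by
      intro i
      rw [ContinuousLinearMap.mul_apply, ContinuousLinearMap.star_eq_adjoint,
        ← ContinuousLinearMap.adjoint_inner_right, ← ContinuousLinearMap.star_eq_adjoint,
        inner_self_eq_norm_sq_to_K]
      rfl
    rw [Finset.sum_congr rfl (fun i _ => h3 i), inner_self_eq_norm_sq_to_K] at h2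
    exact Complex.ofReal_inj.mp (by push_cast; exact h2)
  -- the key fact: `M` is invariant under the adjoints
  have key : ∀ i (x : M), (star (V i)) (x : L) ∈ M := by
    intro i x
    -- compare the two sums
    have hsum : ∑ j, ‖(M.orthogonalProjectionOnto ((star (V j)) (x : L)) : L)‖ ^ 2
        = ∑ j, ‖(star (V j)) (x : L)‖ ^ 2 := by
      have e1 : ∀ j, ‖star (U j) x‖ = ‖(M.orthogonalProjectionOnto ((star (V j)) (x : L)) : L)‖ := by
        intro j; rw [hadj]; rfl
      calc ∑ j, ‖(M.orthogonalProjectionOnto ((star (V j)) (x : L)) : L)‖ ^ 2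
          = ∑ j, ‖star (U j) x‖ ^ 2 := by
            exact Finset.sum_congr rfl fun j _ => by rw [e1]
        _ = ‖x‖ ^ 2 := hUsum x
        _ = ‖(x : L)‖ ^ 2 := rfl
        _ = ∑ j, ‖(star (V j)) (x : L)‖ ^ 2 := (hVsum (x : L)).symm
    have hle : ∀ j ∈ Finset.univ, ‖(M.orthogonalProjectionOnto ((star (V j)) (x : L)) : L)‖ ^ 2
        ≤ ‖(star (V j)) (x : L)‖ ^ 2 := by
      intro j _
      have := pyth ((star (V j)) (x : L))
      nlinarith [sq_nonneg ‖(star (V j)) (x : L) - M.orthogonalProjectionOnto ((star (V j)) (x : L))‖]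
    have heach := (Finset.sum_eq_sum_iff_of_le hle).1 hsum i (Finset.mem_univ i)
    have hz : ‖(star (V i)) (x : L) - M.orthogonalProjectionOnto ((star (V i)) (x : L))‖ ^ 2 = 0 := by
      have := pyth ((star (V i)) (x : L)); linarith
    have hz' : (star (V i)) (x : L) = (M.orthogonalProjectionOnto ((star (V i)) (x : L)) : L) := by
      have := pow_eq_zero_iff (n := 2) (by norm_num) |>.1 hz
      rw [norm_eq_zero, sub_eq_zero] at this
      exact this
    rw [hz']; exact (M.orthogonalProjectionOnto ((star (V i)) (x : L))).2
  -- consequently, the adjoint of `U i` is exactly the restriction of the adjoint of `V i`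
  have hstarU : ∀ i (x : M), ((star (U i) x : M) : L) = star (V i) (x : L) := by
    intro i x
    rw [hadj]
    exact Submodule.starProjection_eq_self_iff.2 (key i x)
  refine ⟨fun i x hx => key i ⟨x, hx⟩, fun i => ?_, fun i j => ?_⟩
  · refine ⟨?_⟩
    ext x
    show ((star (U i)) (U i x) : L) = ((U i) (star (U i) x) : L)
    rw [hstarU, hU, hU, hstarU]
    have := congrArg (fun (A : L →L[ℂ] L) => A (x : L)) (hVnormal i).star_comm_self
    simpa [ContinuousLinearMap.mul_apply] using this
  · ext x
    show ((U i) (U j x) : L) = ((U j) (U i x) : L)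
    rw [hU, hU, hU, hU]
    have := congrArg (fun (A : L →L[ℂ] L) => A (x : L)) (hVcomm i j)
    simpa [ContinuousLinearMap.mul_apply] using this
end
end

section
/- Let μ be a positive regular Borel measure on the unit sphere ∂B_d ⊆ ℂ^d that is singular with respect to every representing measure of the origin (totally singular). Then the analytic polynomials are weak-* dense in L^∞(μ). Equivalently, if f ∈ L^1(μ) satisfies ∫ p f dμ = 0 for all analytic polynomials p, then f = 0 in L^1(μ). (Assume the Cole–Range theorem: every measure annihilating the ball algebra is absolutely continuous with respect to some representing measure of the origin.) -/
open MeasureTheory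

noncomputable section

/-- The Borel σ-algebra on `ℂ^d` (product of the Borel σ-algebras on the factors). -/
instance {d : ℕ} : MeasurableSpace (EuclideanSpace ℂ (Fin d)) :=
  MeasurableSpace.comap (fun x : EuclideanSpace ℂ (Fin d) => (WithLp.ofLp x : Fin d → ℂ))
    MeasurableSpace.pi

/-- The unit sphere in `ℂ^d`. -/
abbrev SphereCd (d : ℕ) : Type := Metric.sphere (0 : EuclideanSpace ℂ (Fin d)) 1

/-- An analytic polynomial, as a function on the unit sphere. -/
def spolyFn {d : ℕ} (p : MvPolynomial (Fin d) ℂ) (z : SphereCd d) : ℂ :=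
  MvPolynomial.eval (fun i => (z : EuclideanSpace ℂ (Fin d)) i) p

/-- A representing measure for the origin: a probability measure on the sphere integrating
analytic polynomials to their value at `0`. -/
def IsRepMeasure {d : ℕ} (ρ : Measure (SphereCd d)) : Prop :=
  IsProbabilityMeasure ρ ∧
    ∀ p : MvPolynomial (Fin d) ℂ, ∫ z, spolyFn p z ∂ρ = MvPolynomial.eval (fun _ => (0 : ℂ)) p

/-- If `μ` is a positive regular Borel measure on the unit sphere which is totally singular
(singular with respect to every representing measure of the origin), then the analytic
polynomials are weak-* dense in `L^∞(μ)`: any `f ∈ L¹(μ)` with `∫ p f dμ = 0` for all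
analytic polynomials `p` vanishes `μ`-a.e.  The Cole–Range theorem is assumed as a
hypothesis. -/
theorem stmt11 {d : ℕ} (μ : Measure (SphereCd d)) [IsFiniteMeasure μ] [μ.Regular]
    (hsing : ∀ ρ : Measure (SphereCd d), IsRepMeasure ρ → μ.MutuallySingular ρ)
    (hColeRange : ∀ (ν : Measure (SphereCd d)), IsFiniteMeasure ν → ν.Regular →
      ∀ g : SphereCd d → ℂ, Integrable g ν →
      (∀ p : MvPolynomial (Fin d) ℂ, ∫ z, spolyFn p z * g z ∂ν = 0) →
      ∃ ρ : Measure (SphereCd d), IsRepMeasure ρ ∧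
        (ν.withDensity fun z => (‖g z‖₊ : ENNReal)) ≪ ρ) :
    ∀ f : SphereCd d → ℂ, Integrable f μ →
      (∀ p : MvPolynomial (Fin d) ℂ, ∫ z, spolyFn p z * f z ∂μ = 0) →
      ∀ᵐ z ∂μ, f z = 0 := by
  intro f hf hann
  obtain ⟨ρ, hrep, habs⟩ := hColeRange μ ‹_› ‹_› f hf hann
  obtain ⟨S, hSmeas, hμS, hρS⟩ := hsing ρ hrep
  set w : Measure (SphereCd d) := μ.withDensity fun z => (‖f z‖₊ : ENNReal) with hw
  have hwS : w S = 0 := (withDensity_absolutelyContinuous μ _) hμS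
  have hwSc : w Sᶜ = 0 := habs hρS
  have hwz : w Set.univ = 0 := by
    have : w Set.univ ≤ w S + w Sᶜ := by
      rw [← Set.union_compl_self S]; exact measure_union_le _ _
    simpa [hwS, hwSc] using this
  have hlint : ∫⁻ z, (‖f z‖₊ : ENNReal) ∂μ = 0 := by
    have := hwz
    rwa [hw, withDensity_apply _ MeasurableSet.univ, Measure.restrict_univ] at this
  have h0 := (lintegral_eq_zero_iff' hf.aestronglyMeasurable.enorm).mp hlint
  filter_upwards [h0] with z hz
  simpa using hz
end
end

section
/- Let T be a commuting tuple of operators on a Hilbert space K that admits a dilation to M_z^κ ⊕ U on H^κ ⊕ L, where M_z is the shift tuple on a regular unitarily invariant space H and U is a spherical unitary whose scalar spectral measure is Mult(H)-Henkin. Then T is Mult(H)-absolutely continuous: the polynomial functional calculus p ↦ p(T) extends to a weak-* continuous algebra homomorphism on Mult(H). (Here one may assume M_z^κ and U are each Mult(H)-absolutely continuous.) -/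
open scoped InnerProductSpace ENNReal
open Filter

noncomputable section

/-- The open unit ball in `ℂ^d`. -/
abbrev Ball (d : ℕ) : Type := {z : EuclideanSpace ℂ (Fin d) // ‖z‖ < 1}

variable {d : ℕ} {H : Type*}
  [NormedAddCommGroup H] [InnerProductSpace ℂ H] [CompleteSpace H]

/-- `A` is the multiplication operator on `H` associated to the multiplier `φ`. -/
def IsMultOp (ev : H →ₗ[ℂ] (Ball d → ℂ)) (φ : Ball d → ℂ) (A : H →L[ℂ] H) : Prop :=
  ∀ (f : H) (z : Ball d), ev (A f) z = φ z * ev f z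

/-- A polynomial, as a function on the ball. -/
def polyFn {d : ℕ} (p : MvPolynomial (Fin d) ℂ) (z : Ball d) : ℂ :=
  MvPolynomial.eval (fun i => (z : EuclideanSpace ℂ (Fin d)) i) p

/-- Evaluation of a polynomial at a (commuting) tuple of elements of an algebra. -/
def opEval {A : Type*} [Ring A] [Algebra ℂ A] {σ : Type*} [Fintype σ]
    (T : σ → A) (p : MvPolynomial σ ℂ) : A :=
  ∑ m ∈ p.support, p.coeff m •
    ((List.finRange (Fintype.card σ)).map fun j =>
      T ((Fintype.equivFin σ).symm j) ^ m ((Fintype.equivFin σ).symm j)).prod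

/-- The tuple `W` is `Mult(H)`-absolutely continuous: the polynomial functional calculus
extends to a weak-* continuous homomorphism on `Mult(H)`.  This is encoded by the standard
characterization: for every sequence of polynomials `pₙ` of multiplier norm at most `1`
converging to `0` pointwise on the ball (i.e. weak-* in `Mult(H)`), the (bounded) sequence
`pₙ(W)` converges to `0` in the weak-* topology of `B(E)`. -/
def TupleMultAC (ev : H →ₗ[ℂ] (Ball d → ℂ)) {E : Type*} [NormedAddCommGroup E]
    [InnerProductSpace ℂ E] (W : Fin d → E →L[ℂ] E) : Prop :=
  ∀ (p : ℕ → MvPolynomial (Fin d) ℂ) (B : ℕ → H →L[ℂ] H),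
    (∀ n, IsMultOp ev (polyFn (p n)) (B n)) → (∀ n, ‖B n‖ ≤ 1) →
    (∀ z : Ball d, Tendsto (fun n => polyFn (p n) z) atTop (nhds 0)) →
    ∀ x y : E, Tendsto (fun n => ⟪opEval W (p n) x, y⟫_ℂ) atTop (nhds 0)

set_option maxHeartbeats 2000000
set_option synthInstance.maxHeartbeats 1000000

/-- If a commuting tuple `T` dilates to `M_z^κ ⊕ U` — where `M_z` is the shift tuple of a
regular unitarily invariant space `H` on the ball (acting diagonally on the `κ`-fold Hilbert
sum `H^κ`) and `U` is a spherical unitary, each assumed `Mult(H)`-absolutely continuous —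
then `T` is `Mult(H)`-absolutely continuous. -/
theorem stmt19 (ev : H →ₗ[ℂ] (Ball d → ℂ)) (k : Ball d → H) (a : ℕ → ℝ)
    (ha0 : a 0 = 1) (hapos : ∀ n, 0 < a n)
    (hregular : Tendsto (fun n => a n / a (n + 1)) atTop (nhds 1))
    (hsum : ∀ z w : Ball d, Summable fun n =>
      (a n : ℂ) * (⟪(w : EuclideanSpace ℂ (Fin d)), (z : EuclideanSpace ℂ (Fin d))⟫_ℂ) ^ n)
    (hrepr : ∀ (f : H) (z : Ball d), ev f z = ⟪k z, f⟫_ℂ)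
    (hker : ∀ z w : Ball d, ⟪k w, k z⟫_ℂ = ∑' n,
      (a n : ℂ) * (⟪(w : EuclideanSpace ℂ (Fin d)), (z : EuclideanSpace ℂ (Fin d))⟫_ℂ) ^ n)
    -- the shift tuple `M_z` on `H`
    (Mz : Fin d → H →L[ℂ] H)
    (hMz : ∀ i, IsMultOp ev (fun z => (z : EuclideanSpace ℂ (Fin d)) i) (Mz i))
    -- `M_z^κ`, acting diagonally on the Hilbert sum `H^κ`
    {ι : Type*}
    (Mzk : Fin d → lp (fun _ : ι => H) 2 →L[ℂ] lp (fun _ : ι => H) 2)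
    (hMzk : ∀ (i : Fin d) (f : lp (fun _ : ι => H) 2) (j : ι), Mzk i f j = Mz i (f j))
    (hMzkAC : TupleMultAC ev Mzk)
    -- the spherical unitary `U` on `L`
    {L : Type*} [NormedAddCommGroup L] [InnerProductSpace ℂ L] [CompleteSpace L]
    (U : Fin d → L →L[ℂ] L)
    (hUcomm : ∀ i j, U i * U j = U j * U i)
    (hUnormal : ∀ i, IsStarNormal (U i))
    (hUrow : (∑ i, U i * star (U i)) = 1)
    (hUAC : TupleMultAC ev U)
    -- the dilation `S = M_z^κ ⊕ U` on `H^κ ⊕ L`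
    (S : Fin d → WithLp 2 (lp (fun _ : ι => H) 2 × L) →L[ℂ] WithLp 2 (lp (fun _ : ι => H) 2 × L))
    (hS : ∀ (i : Fin d) (v : WithLp 2 (lp (fun _ : ι => H) 2 × L)),
      WithLp.equiv 2 (lp (fun _ : ι => H) 2 × L) (S i v) =
        (Mzk i (WithLp.equiv 2 (lp (fun _ : ι => H) 2 × L) v).1,
         U i (WithLp.equiv 2 (lp (fun _ : ι => H) 2 × L) v).2))
    -- `T` on the semi-invariant subspace `K`, dilated by `S`
    (K : Submodule ℂ (WithLp 2 (lp (fun _ : ι => H) 2 × L))) [CompleteSpace K]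
    (T : Fin d → K →L[ℂ] K)
    (hTcomm : ∀ i j, T i * T j = T j * T i)
    (hdil : ∀ (p : MvPolynomial (Fin d) ℂ) (x : K),
      opEval T p x = Submodule.orthogonalProjectionOnto K (opEval S p (x : WithLp 2 (lp (fun _ : ι => H) 2 × L)))) :
    TupleMultAC ev T := by
  classical
  set A := lp (fun _ : ι => H) 2
  set Amb := WithLp 2 (A × L)
  set E2 := WithLp.linearEquiv 2 ℂ (A × L) with hE2
  -- powers act componentwise
  have hSpow : ∀ (i : Fin d) (m : ℕ) (v : Amb),
      E2 ((S i ^ m) v) = ((Mzk i ^ m) (E2 v).1, (U i ^ m) (E2 v).2) := by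
    intro i m
    induction m with
    | zero => intro v; simp
    | succ m ih =>
      intro v
      rw [pow_succ, pow_succ, pow_succ, ContinuousLinearMap.mul_apply,
        ContinuousLinearMap.mul_apply, ContinuousLinearMap.mul_apply]
      have h1 : E2 (S i v) = (Mzk i (E2 v).1, U i (E2 v).2) := hS i v
      rw [ih, h1]
  -- list products act componentwise
  have hlist : ∀ (ms : Fin d → ℕ) (l : List (Fin (Fintype.card (Fin d)))) (v : Amb),
      E2 (((l.map fun j => S ((Fintype.equivFin (Fin d)).symm j)
            ^ ms ((Fintype.equivFin (Fin d)).symm j)).prod) v) =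
        (((l.map fun j => Mzk ((Fintype.equivFin (Fin d)).symm j)
            ^ ms ((Fintype.equivFin (Fin d)).symm j)).prod) (E2 v).1,
         ((l.map fun j => U ((Fintype.equivFin (Fin d)).symm j)
            ^ ms ((Fintype.equivFin (Fin d)).symm j)).prod) (E2 v).2) := by
    intro ms l
    induction l with
    | nil => intro v; simp
    | cons a l ih =>
      intro v
      simp only [List.map_cons, List.prod_cons, ContinuousLinearMap.mul_apply]
      rw [hSpow, ih]
  -- opEval acts componentwise
  have hop : ∀ (q : MvPolynomial (Fin d) ℂ) (v : Amb),
      E2 (opEval S q v) = (opEval Mzk q (E2 v).1, opEval U q (E2 v).2) := by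
    intro q v
    simp only [opEval, ContinuousLinearMap.sum_apply, ContinuousLinearMap.smul_apply,
      map_sum, map_smul]
    rw [Prod.ext_iff]
    constructor
    · simp only [Prod.fst_sum, Prod.smul_fst]
      refine Finset.sum_congr rfl fun m _ => ?_
      rw [hlist (fun i => m i) _ v]
    · simp only [Prod.snd_sum, Prod.smul_snd]
      refine Finset.sum_congr rfl fun m _ => ?_
      rw [hlist (fun i => m i) _ v]
  -- main argument
  intro p B hB hBnorm hp x y
  have h1 := hMzkAC p B hB hBnorm hp (E2 (x : Amb)).1 (E2 (y : Amb)).1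
  have h2 := hUAC p B hB hBnorm hp (E2 (x : Amb)).2 (E2 (y : Amb)).2
  have key : ∀ n, ⟪opEval T (p n) x, y⟫_ℂ =
      ⟪opEval Mzk (p n) (E2 (x : Amb)).1, (E2 (y : Amb)).1⟫_ℂ +
      ⟪opEval U (p n) (E2 (x : Amb)).2, (E2 (y : Amb)).2⟫_ℂ := by
    intro n
    rw [hdil (p n) x, Submodule.inner_orthogonalProjectionOnto_eq_of_mem_right]
    have hx := hop (p n) (x : Amb)
    have : ⟪opEval S (p n) (x : Amb), (y : Amb)⟫_ℂ =
        ⟪(opEval S (p n) (x : Amb)).fst, ((y : Amb)).fst⟫_ℂ +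
        ⟪(opEval S (p n) (x : Amb)).snd, ((y : Amb)).snd⟫_ℂ :=
      WithLp.prod_inner_apply _ _
    rw [this]
    have hfst : (opEval S (p n) (x : Amb)).fst = opEval Mzk (p n) (E2 (x : Amb)).1 :=
      congrArg Prod.fst hx
    have hsnd : (opEval S (p n) (x : Amb)).snd = opEval U (p n) (E2 (x : Amb)).2 :=
      congrArg Prod.snd hx
    rw [hfst, hsnd]
    rfl
  simp only [key]
  simpa using h1.add h2
end
end
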